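/- Let b > 0, p > 0, q > 0 and let (u, v) with u > 0, v > 0 satisfy b u (1 - u) = v and p u v + q u v^2 = v. Consider the 2×2 real matrix J with first row (-b u, -(1 + q u v)) and second row (b(1-u), q u v). Then the trace of J equals u(q v - b) and the determinant of J equals u v f'(1/u), where f'(s) = 3 s^2 - 2 p s - q b. -/

import Mathlib

/-- At a positive equilibrium `(u, v)`, the Jacobian matrix
`J = !![-bu, -(1+quv); b(1-u), quv]` has trace `u(qv - b)` and determinant
`u v f'(1/u)` where `f'(s) = 3s^2 - 2ps - qb`. -/
theorem jacobian_trace_det (b p q : ℝ) (hb : 0 < b) (hp : 0 < p) (hq : 0 < q)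
    (u v : ℝ) (hu : 0 < u) (hv : 0 < v)
    (heq1 : b * u * (1 - u) = v) (heq2 : p * u * v + q * u * v ^ 2 = v)
    (J : Matrix (Fin 2) (Fin 2) ℝ)
    (hJ : J = !![-(b * u), -(1 + q * u * v); b * (1 - u), q * u * v]) :
    Matrix.trace J = u * (q * v - b) ∧
    J.det = u * v * (3 * (1 / u) ^ 2 - 2 * p * (1 / u) - q * b) := by
  subst hJ
  have hu' : u ≠ 0 := ne_of_gt hu
  have hv' : v ≠ 0 := ne_of_gt hv
  constructor
  · simp [Matrix.trace_fin_two]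
    ring
  · simp [Matrix.det_fin_two]
    field_simp
    linear_combination (1 + 2 * q * u * v) * heq1 + 2 * heq2
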